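/- Let n ≥ 3 and 1 ≤ m ≤ n−2. Let N⁺ be the set of (a⁺, b⁺) ∈ SU(2)^{m+1} × SU(2)^{m+2}, with a⁺ = (a⁺_2,…,a⁺_{m+2}) and b⁺ = (b⁺_1,…,b⁺_{m+2}), satisfying b⁺_1 (a⁺_2 b⁺_2 (a⁺_2)⁻¹) ⋯ (a⁺_{m+2} b⁺_{m+2} (a⁺_{m+2})⁻¹) = 1, and let N⁻ be the set of (a⁻, b⁻) ∈ SU(2)^{n−m−1} × SU(2)^{n−m}, with a⁻ = (a⁻_2,…,a⁻_{n−m}) and b⁻ = (b⁻_1,…,b⁻_{n−m}), satisfying b⁻_1 (a⁻_2 b⁻_2 (a⁻_2)⁻¹) ⋯ (a⁻_{n−m} b⁻_{n−m} (a⁻_{n−m})⁻¹) = 1. Let Z = {((a⁺,b⁺),(a⁻,b⁻)) ∈ N⁺ × N⁻ : b⁻_1 b⁺_{m+2} = 1}, with SU(2) acting on Z by σ·((a⁺,b⁺),(a⁻,b⁻)) = ((a⁺_2,…,a⁺_{m+1}, a⁺_{m+2}σ⁻¹, b⁺_1,…,b⁺_{m+1}, σ b⁺_{m+2} σ⁻¹),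 (σ a⁻_2,…,σ a⁻_{n−m}, σ b⁻_1 σ⁻¹, b⁻_2,…,b⁻_{n−m})). Then the map π_C sending ((a⁺,b⁺),(a⁻,b⁻)) to (a⁺_2,…,a⁺_{m+1}, a⁺_{m+2}a⁻_2, …, a⁺_{m+2}a⁻_{n−m}, b⁺_1,…,b⁺_{m+1}, b⁻_2,…,b⁻_{n−m}) takes values in N^G(Σ), is surjective onto N^G(Σ), its fibers are exactly the SU(2)-orbits in Z, and it induces a homeomorphism from the quotient space Z/SU(2) onto N^G(Σ). -/

import Mathlib

noncomputable section

open Matrix Complex Real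

/-- 2×2 complex matrices. -/
abbrev M2 : Type := Matrix (Fin 2) (Fin 2) ℂ

/-- The special unitary group SU(2), as a subgroup of the unitary group. -/
def SU2 : Subgroup (Matrix.unitaryGroup (Fin 2) ℂ) where
  carrier := { g | Matrix.det (g : M2) = 1 }
  one_mem' := by simp
  mul_mem' := by
    intro a b ha hb
    simp only [Set.mem_setOf_eq, Matrix.UnitaryGroup.mul_val, Matrix.det_mul] at *
    rw [ha, hb, mul_one]
  inv_mem' := by
    intro a ha
    simp only [Set.mem_setOf_eq, Matrix.UnitaryGroup.inv_val] at *
    show Matrix.det (star (a : M2)) = 1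
    have : star (a : M2) = (a : M2)ᴴ := rfl
    rw [this, Matrix.det_conjTranspose, ha, star_one]

/-- The underlying matrix of an element of SU(2). -/
def mat (g : SU2) : M2 := ((g : Matrix.unitaryGroup (Fin 2) ℂ) : M2)

@[simp] lemma mat_one : mat (1 : SU2) = 1 := rfl
@[simp] lemma mat_mul (g h : SU2) : mat (g * h) = mat g * mat h := rfl
@[simp] lemma mat_inv (g : SU2) : mat g⁻¹ = star (mat g) := rfl

/-- The diagonal matrix `exp(α x₀) = diag(e^{2πiα}, e^{-2πiα})`. -/
def expD (α : ℝ) : M2 :=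
  Matrix.diagonal ![Complex.exp (2 * Real.pi * α * Complex.I),
                    Complex.exp (-(2 * Real.pi * α * Complex.I))]

lemma expD_mem (α : ℝ) : expD α ∈ Matrix.unitaryGroup (Fin 2) ℂ := by
  rw [Matrix.mem_unitaryGroup_iff]
  show expD α * (expD α)ᴴ = 1
  rw [expD, Matrix.diagonal_conjTranspose, Matrix.diagonal_mul_diagonal]
  have h : (fun i => ![Complex.exp (2 * Real.pi * α * Complex.I),
      Complex.exp (-(2 * Real.pi * α * Complex.I))] i *
      star ![Complex.exp (2 * Real.pi * α * Complex.I),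
      Complex.exp (-(2 * Real.pi * α * Complex.I))] i) = (1 : Fin 2 → ℂ) := by
    funext i
    fin_cases i <;>
      simp [Pi.star_apply, Complex.star_def, ← Complex.exp_conj,
        ← Complex.exp_add, Complex.conj_I, Complex.conj_ofReal] <;>
      simp [map_ofNat]
  rw [h]
  exact Matrix.diagonal_one

lemma expD_det (α : ℝ) : (expD α).det = 1 := by
  rw [expD, Matrix.det_diagonal]
  rw [show (Finset.univ : Finset (Fin 2)) = {0, 1} from rfl]
  rw [Finset.prod_insert (by simp), Finset.prod_singleton]
  simp [← Complex.exp_add]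

/-- `exp(α x₀)` as an element of SU(2). -/
def diagSU2 (α : ℝ) : SU2 := ⟨⟨expD α, expD_mem α⟩, expD_det α⟩

/-- The conjugacy class `C_α ⊂ SU(2)` of `exp(α x₀)`. -/
def Cα (α : ℝ) : Set SU2 := { g | ∃ u : SU2, u * diagSU2 α * u⁻¹ = g }

/-- The `G`-extended moduli space `N^G(Σ)` for `n = m+1` marked points: tuples
`(a_2,…,a_n, b_1,…,b_n)` with `b_1 (a_2 b_2 a_2⁻¹) ⋯ (a_n b_n a_n⁻¹) = 1`.
Here `a i` stands for `a_{i+2}` and `b i` for `b_{i+1}`. -/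
def NGset (m : ℕ) : Set ((Fin m → SU2) × (Fin (m+1) → SU2)) :=
  { p | p.2 0 * (List.ofFn (fun i : Fin m => p.1 i * p.2 i.succ * (p.1 i)⁻¹)).prod = 1 }

/-- The subset `N^G(Σ;α)` where each `b_i` lies in the conjugacy class `C_{α_i}`. -/
def NGsetW (m : ℕ) (α : Fin (m+1) → ℝ) : Set ((Fin m → SU2) × (Fin (m+1) → SU2)) :=
  { p | p ∈ NGset m ∧ ∀ i, p.2 i ∈ Cα (α i) }
/-- The relation defining the extended moduli space: `b_1 ∏ a_i b_i a_i⁻¹ = 1`. -/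
def NGrel {m : ℕ} (a : Fin m → SU2) (b : Fin (m+1) → SU2) : Prop :=
  b 0 * (List.ofFn (fun i : Fin m => a i * b i.succ * (a i)⁻¹)).prod = 1

/-- The set `Z ⊆ N⁺ × N⁻` of pairs glued along the curve `C`, i.e. with
`b⁻_1 b⁺_{m+2} = 1`.  Here `N⁺` has `m+2` boundary circles and `N⁻` has `k+1`. -/
def Zset (m k : ℕ) :
    Set (((Fin (m+1) → SU2) × (Fin (m+2) → SU2)) × ((Fin k → SU2) × (Fin (k+1) → SU2))) :=
  { z | NGrel z.1.1 z.1.2 ∧ NGrel z.2.1 z.2.2 ∧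
        z.2.2 0 * z.1.2 (Fin.last (m+1)) = 1 }

/-- The `SU(2)`-action on `Z` used for the gluing. -/
def actZ (m k : ℕ) (σ : SU2)
    (z : ((Fin (m+1) → SU2) × (Fin (m+2) → SU2)) × ((Fin k → SU2) × (Fin (k+1) → SU2))) :
    ((Fin (m+1) → SU2) × (Fin (m+2) → SU2)) × ((Fin k → SU2) × (Fin (k+1) → SU2)) :=
  ((fun i => if i = Fin.last m then z.1.1 i * σ⁻¹ else z.1.1 i,
    fun i => if i = Fin.last (m+1) then σ * z.1.2 i * σ⁻¹ else z.1.2 i),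
   (fun j => σ * z.2.1 j,
    fun j => if j = 0 then σ * z.2.2 j * σ⁻¹ else z.2.2 j))

lemma actZ_one (m k : ℕ) (z) : actZ m k 1 z = z := by
  obtain ⟨⟨ap, bp⟩, ⟨am, bm⟩⟩ := z
  unfold actZ
  simp only [Prod.mk.injEq]
  refine ⟨⟨?_, ?_⟩, ?_, ?_⟩ <;> funext i <;> try split_ifs
  all_goals group

lemma actZ_mul (m k : ℕ) (σ τ : SU2) (z) :
    actZ m k τ (actZ m k σ z) = actZ m k (τ * σ) z := by
  obtain ⟨⟨ap, bp⟩, ⟨am, bm⟩⟩ := z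
  unfold actZ
  simp only [Prod.mk.injEq]
  refine ⟨⟨?_, ?_⟩, ?_, ?_⟩ <;> funext i <;> try split_ifs
  all_goals group

/-- The orbit equivalence for the `SU(2)`-action on `Z`. -/
def zSetoid (m k : ℕ) : Setoid (Zset m k) where
  r z w := ∃ σ : SU2, actZ m k σ z.1 = w.1
  iseqv := by
    constructor
    · intro z; exact ⟨1, actZ_one m k z.1⟩
    · rintro z w ⟨σ, h⟩
      refine ⟨σ⁻¹, ?_⟩
      rw [← h, actZ_mul, inv_mul_cancel, actZ_one]
    · rintro z w v ⟨σ, h⟩ ⟨τ, h'⟩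
      refine ⟨τ * σ, ?_⟩
      rw [← actZ_mul, h, h']

/-- The gluing map `π_C`. -/
def piC (m k : ℕ)
    (z : ((Fin (m+1) → SU2) × (Fin (m+2) → SU2)) × ((Fin k → SU2) × (Fin (k+1) → SU2))) :
    (Fin (m+k) → SU2) × (Fin (m+k+1) → SU2) :=
  (fun i => if h : i.1 < m then z.1.1 ⟨i.1, by omega⟩
            else z.1.1 (Fin.last m) * z.2.1 ⟨i.1 - m, by omega⟩,
   fun i => if h : i.1 < m + 1 then z.1.2 ⟨i.1, by omega⟩
            else z.2.2 ⟨i.1 - m, by omega⟩)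


/-! ### Auxiliary topology and algebra lemmas -/

section AuxTop

instance SU2_topGroup_ambient : IsTopologicalGroup (Matrix.unitaryGroup (Fin 2) ℂ) where
  continuous_mul := by
    apply Continuous.subtype_mk
    exact ((continuous_subtype_val.comp continuous_fst).matrix_mul
      (continuous_subtype_val.comp continuous_snd))
  continuous_inv := by
    apply Continuous.subtype_mk
    exact continuous_subtype_val.matrix_conjTranspose

lemma unitary_row (A : M2) (hA : A ∈ Matrix.unitaryGroup (Fin 2) ℂ) (i : Fin 2) :
    ∑ j : Fin 2, Complex.normSq (A i j) = 1 := by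
  have h1 := congrFun (congrFun hA.2 i) i
  rw [Matrix.mul_apply, Matrix.one_apply_eq] at h1
  simp only [Matrix.star_apply, Complex.star_def, Complex.mul_conj] at h1
  exact_mod_cast h1

lemma isCompact_unitary2 : IsCompact ((Matrix.unitaryGroup (Fin 2) ℂ) : Set M2) := by
  have hK : IsCompact (Set.pi Set.univ fun _ : Fin 2 =>
      Set.pi Set.univ fun _ : Fin 2 => Metric.closedBall (0:ℂ) 1) :=
    isCompact_univ_pi fun _ => isCompact_univ_pi fun _ => isCompact_closedBall _ _
  apply hK.of_isClosed_subset
  · have : ((Matrix.unitaryGroup (Fin 2) ℂ) : Set M2) =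
        (fun A : M2 => A * star A) ⁻¹' {1} ∩ (fun A : M2 => star A * A) ⁻¹' {1} := by
      ext A
      constructor
      · rintro ⟨h1, h2⟩; exact ⟨h2, h1⟩
      · rintro ⟨h1, h2⟩; exact ⟨h2, h1⟩
    rw [this]
    exact (IsClosed.preimage (continuous_id.matrix_mul continuous_id.matrix_conjTranspose)
        isClosed_singleton).inter
      (IsClosed.preimage (continuous_id.matrix_conjTranspose.matrix_mul continuous_id)
        isClosed_singleton)
  · intro A hA i _ j _
    simp only [Metric.mem_closedBall, dist_zero_right]
    have h2 : Complex.normSq (A i j) ≤ 1 := by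
      rw [← unitary_row A hA i]
      exact Finset.single_le_sum (fun j _ => Complex.normSq_nonneg _) (Finset.mem_univ j)
    calc ‖A i j‖ = Real.sqrt (Complex.normSq (A i j)) := Complex.norm_def _
      _ ≤ Real.sqrt 1 := Real.sqrt_le_sqrt h2
      _ = 1 := Real.sqrt_one

instance : CompactSpace (Matrix.unitaryGroup (Fin 2) ℂ) :=
  isCompact_iff_compactSpace.mp isCompact_unitary2

instance : CompactSpace SU2 := by
  have hcl : IsClosed (SU2 : Set (Matrix.unitaryGroup (Fin 2) ℂ)) := by
    have : (SU2 : Set (Matrix.unitaryGroup (Fin 2) ℂ)) =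
        (fun g : Matrix.unitaryGroup (Fin 2) ℂ => Matrix.det (g : M2)) ⁻¹' {1} := rfl
    rw [this]
    exact IsClosed.preimage (continuous_subtype_val.matrix_det) isClosed_singleton
  exact isCompact_iff_compactSpace.mp hcl.isCompact

example : IsTopologicalGroup SU2 := by infer_instance
example : T2Space SU2 := by infer_instance

/-- Continuity of ordered products of `List.ofFn`. -/
lemma continuous_ofFn_prod {X M : Type*} [TopologicalSpace X] [TopologicalSpace M]
    [Monoid M] [ContinuousMul M] :
    ∀ {n : ℕ} (f : Fin n → X → M), (∀ i, Continuous (f i)) →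
      Continuous fun x => (List.ofFn fun i => f i x).prod
  | 0, f, _ => by
      simp only [List.ofFn_zero, List.prod_nil]
      exact continuous_const
  | n + 1, f, hf => by
      simp only [List.ofFn_succ, List.prod_cons]
      exact (hf 0).mul (continuous_ofFn_prod _ fun i => hf i.succ)

end AuxTop

section AuxAlg

variable {G : Type*} [Group G]

lemma fcongr {n : ℕ} {α : Sort*} (f : Fin n → α) {i j : Fin n} (h : i.1 = j.1) : f i = f j :=
  congrArg f (Fin.ext h)

lemma prod_ofFn_split {m k : ℕ} (f : Fin (m + k) → G) :
    (List.ofFn f).prod =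
      (List.ofFn fun i : Fin m => f (Fin.castAdd k i)).prod *
        (List.ofFn fun j : Fin k => f (Fin.natAdd m j)).prod := by
  rw [List.ofFn_add, List.prod_append]
  rfl

lemma prod_ofFn_conj {k : ℕ} (A : G) (c : Fin k → G) :
    (List.ofFn fun j => A * c j * A⁻¹).prod = A * (List.ofFn c).prod * A⁻¹ := by
  induction k with
  | zero => simp
  | succ k ih =>
      rw [List.ofFn_succ, List.prod_cons, List.ofFn_succ (f := c), List.prod_cons,
        ih (fun j => c j.succ)]
      group

lemma prod_ofFn_one_eq {G : Type*} [Monoid G] (f : Fin 1 → G) :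
    (List.ofFn f).prod = f 0 := by
  simp

end AuxAlg

section Glue

/-- Ambient space for `Z`. -/
abbrev Amb (m k : ℕ) : Type :=
  ((Fin (m+1) → SU2) × (Fin (m+2) → SU2)) × ((Fin k → SU2) × (Fin (k+1) → SU2))

/-- The ordered product `∏ a_i b_{i+1} a_i⁻¹`. -/
def Ppart {n : ℕ} (a : Fin n → SU2) (b : Fin (n+1) → SU2) : SU2 :=
  (List.ofFn fun i => a i * b i.succ * (a i)⁻¹).prod

lemma NGrel_iff {n : ℕ} (a : Fin n → SU2) (b : Fin (n+1) → SU2) :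
    NGrel a b ↔ b 0 * Ppart a b = 1 := Iff.rfl

lemma mem_NGset_iff {n : ℕ} (p : (Fin n → SU2) × (Fin (n+1) → SU2)) :
    p ∈ NGset n ↔ p.2 0 * Ppart p.1 p.2 = 1 := Iff.rfl

lemma Ppart_congr {n : ℕ} (a : Fin n → SU2) (b b' : Fin (n+1) → SU2)
    (h : ∀ j : Fin n, b j.succ = b' j.succ) : Ppart a b = Ppart a b' :=
  congrArg List.prod (congrArg List.ofFn (funext fun j => by rw [h j]))

lemma Ppart_split (m k : ℕ) (a : Fin (m+k) → SU2) (b : Fin (m+k+1) → SU2) :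
    Ppart a b =
      Ppart (fun i : Fin m => a ⟨i.1, by omega⟩) (fun i : Fin (m+1) => b ⟨i.1, by omega⟩) *
      Ppart (fun j : Fin k => a ⟨m + j.1, by omega⟩)
            (fun j : Fin (k+1) => b ⟨m + j.1, by omega⟩) := by
  unfold Ppart
  rw [prod_ofFn_split (fun i => a i * b i.succ * (a i)⁻¹)]
  refine congrArg₂ (· * ·) ?_ ?_
  · refine congrArg List.prod (congrArg List.ofFn (funext fun i => ?_))
    have h1 : a (Fin.castAdd k i) = a ⟨i.1, by omega⟩ := fcongr a (by simp)
    have h2 : b (Fin.castAdd k i).succ = b ⟨i.1 + 1, by omega⟩ := fcongr b (by simp)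
    rw [h1, h2]; rfl
  · refine congrArg List.prod (congrArg List.ofFn (funext fun j => ?_))
    have h1 : a (Fin.natAdd m j) = a ⟨m + j.1, by omega⟩ := fcongr a (by simp)
    have h2 : b (Fin.natAdd m j).succ = b ⟨m + j.1 + 1, by omega⟩ := fcongr b (by simp)
    rw [h1, h2]; rfl

lemma Ppart_conj {k : ℕ} (A : SU2) (a : Fin k → SU2) (b : Fin (k+1) → SU2) :
    Ppart (fun j => A * a j) b = A * Ppart a b * A⁻¹ := by
  unfold Ppart
  rw [← prod_ofFn_conj A (fun j => a j * b j.succ * (a j)⁻¹)]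
  exact congrArg List.prod (congrArg List.ofFn (funext fun j => by group))

lemma Ppart_one (a : Fin 1 → SU2) (b : Fin 2 → SU2) :
    Ppart a b = a 0 * b 1 * (a 0)⁻¹ := by
  unfold Ppart
  simp

lemma piC_fst_lt (m k : ℕ) (z : Amb m k) (i : Fin (m+k)) (h : i.1 < m) :
    (piC m k z).1 i = z.1.1 ⟨i.1, by omega⟩ := dif_pos h

lemma piC_fst_ge (m k : ℕ) (z : Amb m k) (i : Fin (m+k)) (h : ¬ i.1 < m) :
    (piC m k z).1 i = z.1.1 (Fin.last m) * z.2.1 ⟨i.1 - m, by have := i.2; omega⟩ := dif_neg h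

lemma piC_snd_lt (m k : ℕ) (z : Amb m k) (i : Fin (m+k+1)) (h : i.1 < m + 1) :
    (piC m k z).2 i = z.1.2 ⟨i.1, by omega⟩ := dif_pos h

lemma piC_snd_ge (m k : ℕ) (z : Amb m k) (i : Fin (m+k+1)) (h : ¬ i.1 < m + 1) :
    (piC m k z).2 i = z.2.2 ⟨i.1 - m, by have := i.2; omega⟩ := dif_neg h

/-- Part 1: `π_C` maps `Z` into `N^G(Σ)`. -/
lemma piC_mem (m k : ℕ) (hk : 1 ≤ k) (z : Amb m k) (hz : z ∈ Zset m k) :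
    piC m k z ∈ NGset (m+k) := by
  obtain ⟨h1, h2, h3⟩ := hz
  rw [mem_NGset_iff, Ppart_split m k]
  -- identify the four restricted tuples
  have ea1 : (fun i : Fin m => (piC m k z).1 ⟨i.1, by omega⟩) =
      (fun i : Fin m => z.1.1 ⟨i.1, by omega⟩) := by
    funext i
    rw [piC_fst_lt m k z _ (by exact i.2)]
  have eb1 : (fun i : Fin (m+1) => (piC m k z).2 ⟨i.1, by omega⟩) =
      (fun i : Fin (m+1) => z.1.2 ⟨i.1, by omega⟩) := by
    funext i
    rw [piC_snd_lt m k z _ (by exact i.2)]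
  have ea2 : (fun j : Fin k => (piC m k z).1 ⟨m + j.1, by omega⟩) =
      (fun j : Fin k => z.1.1 (Fin.last m) * z.2.1 j) := by
    funext j
    rw [piC_fst_ge m k z _ (by show ¬ m + j.1 < m; omega)]
    congr 1
    exact fcongr z.2.1 (by simp)
  rw [ea1, eb1, ea2]
  -- second factor is a conjugate of the lower product
  have e2 : Ppart (fun j : Fin k => z.1.1 (Fin.last m) * z.2.1 j)
        (fun j : Fin (k+1) => (piC m k z).2 ⟨m + j.1, by omega⟩) =
      z.1.1 (Fin.last m) * Ppart z.2.1 z.2.2 * (z.1.1 (Fin.last m))⁻¹ := by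
    rw [Ppart_congr (fun j : Fin k => z.1.1 (Fin.last m) * z.2.1 j)
      (fun j : Fin (k+1) => (piC m k z).2 ⟨m + j.1, by omega⟩)
      (fun j : Fin (k+1) => z.2.2 j) ?_, Ppart_conj]
    intro j
    have key : (piC m k z).2 ⟨m + j.1 + 1, by have := j.isLt; omega⟩ = z.2.2 j.succ := by
      rw [piC_snd_ge m k z ⟨m + j.1 + 1, by have := j.isLt; omega⟩ (by
        show ¬ m + j.1 + 1 < m + 1
        omega)]
      exact fcongr z.2.2 (by show m + j.1 + 1 - m = j.1 + 1; omega)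
    exact key
  rw [e2]
  -- use the three relations
  rw [NGrel_iff] at h1 h2
  have hQ : Ppart z.2.1 z.2.2 = (z.2.2 0)⁻¹ := by
    rw [eq_inv_iff_mul_eq_one]
    calc Ppart z.2.1 z.2.2 * z.2.2 0 = (z.2.2 0)⁻¹ * (z.2.2 0 * Ppart z.2.1 z.2.2) * z.2.2 0 := by group
      _ = 1 := by rw [h2]; group
  have hB : z.1.2 (Fin.last (m+1)) = (z.2.2 0)⁻¹ := by
    rw [eq_inv_iff_mul_eq_one]
    calc z.1.2 (Fin.last (m+1)) * z.2.2 0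
        = (z.2.2 0)⁻¹ * (z.2.2 0 * z.1.2 (Fin.last (m+1))) * z.2.2 0 := by group
      _ = 1 := by rw [h3]; group
  rw [hQ, ← hB]
  -- compare with the split of `h1`
  rw [Ppart_split m 1 z.1.1 z.1.2, Ppart_one] at h1
  have e5 : (piC m k z).2 0 = z.1.2 0 := by
    rw [piC_snd_lt m k z 0 (by simp)]
    exact fcongr z.1.2 rfl
  rw [e5]
  rw [show Fin.last m = ⟨m + ((0 : Fin 1) : ℕ), by omega⟩ from Fin.ext (by simp)]
  rw [show Fin.last (m+1) = ⟨m + ((1 : Fin 2) : ℕ), by omega⟩ from Fin.ext (by simp [Fin.last])]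
  exact h1

end Glue

section Surj
/-- The lower-half product built from a glued tuple. -/
def QQ (m k : ℕ) (p : (Fin (m+k) → SU2) × (Fin (m+k+1) → SU2)) : SU2 :=
  Ppart (fun j : Fin k => p.1 ⟨m + j.1, by omega⟩)
        (fun j : Fin (k+1) => p.2 ⟨m + j.1, by omega⟩)

/-- A canonical preimage of a glued tuple under `π_C`. -/
def liftZ (m k : ℕ) (p : (Fin (m+k) → SU2) × (Fin (m+k+1) → SU2)) : Amb m k :=
  ((fun i => if _ : i.1 < m then p.1 ⟨i.1, by omega⟩ else 1,
    fun i => if _ : i.1 < m+1 then p.2 ⟨i.1, by omega⟩ else QQ m k p),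
   (fun j => p.1 ⟨m + j.1, by omega⟩,
    fun j => if _ : j.1 = 0 then (QQ m k p)⁻¹ else p.2 ⟨m + j.1, by omega⟩))

variable {m k : ℕ} (p : (Fin (m+k) → SU2) × (Fin (m+k+1) → SU2))

lemma liftZ_ap_lt (i : Fin (m+1)) (h : i.1 < m) :
    (liftZ m k p).1.1 i = p.1 ⟨i.1, by omega⟩ := dif_pos h
lemma liftZ_ap_ge (i : Fin (m+1)) (h : ¬ i.1 < m) :
    (liftZ m k p).1.1 i = 1 := dif_neg h
lemma liftZ_bp_lt (i : Fin (m+2)) (h : i.1 < m+1) :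
    (liftZ m k p).1.2 i = p.2 ⟨i.1, by omega⟩ := dif_pos h
lemma liftZ_bp_ge (i : Fin (m+2)) (h : ¬ i.1 < m+1) :
    (liftZ m k p).1.2 i = QQ m k p := dif_neg h
lemma liftZ_am (j : Fin k) :
    (liftZ m k p).2.1 j = p.1 ⟨m + j.1, by omega⟩ := rfl
lemma liftZ_bm_zero (j : Fin (k+1)) (h : j.1 = 0) :
    (liftZ m k p).2.2 j = (QQ m k p)⁻¹ := dif_pos h
lemma liftZ_bm_pos (j : Fin (k+1)) (h : ¬ j.1 = 0) :
    (liftZ m k p).2.2 j = p.2 ⟨m + j.1, by omega⟩ := dif_neg h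

lemma Ppart_liftZ_lower : Ppart (liftZ m k p).2.1 (liftZ m k p).2.2 = QQ m k p := by
  have h1 : (liftZ m k p).2.1 = fun j : Fin k => p.1 ⟨m + j.1, by omega⟩ := rfl
  rw [h1, show QQ m k p = Ppart (fun j : Fin k => p.1 ⟨m + j.1, by omega⟩)
        (fun j : Fin (k+1) => p.2 ⟨m + j.1, by omega⟩) from rfl]
  apply Ppart_congr
  intro j
  rw [liftZ_bm_pos p j.succ (by simp)]

lemma liftZ_mem (hk : 1 ≤ k) (hp : p ∈ NGset (m+k)) : liftZ m k p ∈ Zset m k := by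
  rw [mem_NGset_iff, Ppart_split m k p.1 p.2] at hp
  refine ⟨?_, ?_, ?_⟩
  · -- upper relation
    rw [NGrel_iff, Ppart_split m 1, Ppart_one]
    have e1 : (liftZ m k p).1.2 0 = p.2 0 := by
      rw [liftZ_bp_lt p 0 (by simp)]
      exact fcongr p.2 (by simp)
    have e2 : Ppart (fun i : Fin m => (liftZ m k p).1.1 ⟨i.1, by omega⟩)
        (fun i : Fin (m+1) => (liftZ m k p).1.2 ⟨i.1, by omega⟩) =
        Ppart (fun i : Fin m => p.1 ⟨i.1, by omega⟩)
          (fun i : Fin (m+1) => p.2 ⟨i.1, by omega⟩) := by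
      refine congrArg₂ Ppart (funext fun i => ?_) (funext fun i => ?_)
      · rw [liftZ_ap_lt p _ (by exact i.2)]
      · rw [liftZ_bp_lt p _ (by exact i.2)]
    have e3 : (liftZ m k p).1.1 ⟨m + ((0 : Fin 1) : ℕ), by omega⟩ = 1 :=
      liftZ_ap_ge p _ (by simp)
    have e4 : (liftZ m k p).1.2 ⟨m + ((1 : Fin 2) : ℕ), by omega⟩ = QQ m k p :=
      liftZ_bp_ge p _ (by simp)
    rw [e1, e2, e3, e4]
    calc p.2 0 * (Ppart (fun i : Fin m => p.1 ⟨i.1, by omega⟩)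
            (fun i : Fin (m+1) => p.2 ⟨i.1, by omega⟩) * (1 * QQ m k p * 1⁻¹)) =
        p.2 0 * (Ppart (fun i : Fin m => p.1 ⟨i.1, by omega⟩)
            (fun i : Fin (m+1) => p.2 ⟨i.1, by omega⟩) * QQ m k p) := by group
      _ = 1 := hp
  · -- lower relation
    rw [NGrel_iff, Ppart_liftZ_lower, liftZ_bm_zero p 0 (by simp), inv_mul_cancel]
  · -- gluing relation
    rw [liftZ_bm_zero p 0 (by simp), liftZ_bp_ge p _ (by simp), inv_mul_cancel]

lemma piC_liftZ (hk : 1 ≤ k) : piC m k (liftZ m k p) = p := by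
  refine Prod.ext ?_ ?_
  · funext i
    by_cases h : i.1 < m
    · rw [piC_fst_lt m k _ i h, liftZ_ap_lt p _ (by exact h)]
    · rw [piC_fst_ge m k _ i h, liftZ_ap_ge p _ (by simp), liftZ_am p _, one_mul]
      exact fcongr p.1 (by simp; omega)
  · funext i
    by_cases h : i.1 < m + 1
    · rw [piC_snd_lt m k _ i h, liftZ_bp_lt p _ (by exact h)]
    · rw [piC_snd_ge m k _ i h, liftZ_bm_pos p _ (by simp; omega)]
      exact fcongr p.2 (by simp; omega)
end Surj

section Orbits
variable {m k : ℕ}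

lemma actZ_ap (σ : SU2) (z : Amb m k) (i : Fin (m+1)) :
    (actZ m k σ z).1.1 i = if i = Fin.last m then z.1.1 i * σ⁻¹ else z.1.1 i := rfl
lemma actZ_bp (σ : SU2) (z : Amb m k) (i : Fin (m+2)) :
    (actZ m k σ z).1.2 i = if i = Fin.last (m+1) then σ * z.1.2 i * σ⁻¹ else z.1.2 i := rfl
lemma actZ_am (σ : SU2) (z : Amb m k) (j : Fin k) :
    (actZ m k σ z).2.1 j = σ * z.2.1 j := rfl
lemma actZ_bm (σ : SU2) (z : Amb m k) (j : Fin (k+1)) :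
    (actZ m k σ z).2.2 j = if j = 0 then σ * z.2.2 j * σ⁻¹ else z.2.2 j := rfl

/-- `π_C` is invariant under the `SU(2)`-action. -/
lemma piC_actZ (σ : SU2) (z : Amb m k) : piC m k (actZ m k σ z) = piC m k z := by
  refine Prod.ext ?_ ?_
  · funext i
    by_cases h : i.1 < m
    · rw [piC_fst_lt m k _ i h, piC_fst_lt m k z i h, actZ_ap,
        if_neg (fun hEq => by have hv := congrArg Fin.val hEq; simp [Fin.last] at hv; omega)]
    · rw [piC_fst_ge m k _ i h, piC_fst_ge m k z i h, actZ_ap, actZ_am,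
        if_pos rfl]
      group
  · funext i
    by_cases h : i.1 < m + 1
    · rw [piC_snd_lt m k _ i h, piC_snd_lt m k z i h, actZ_bp,
        if_neg (fun hEq => by have hv := congrArg Fin.val hEq; simp [Fin.last] at hv; omega)]
    · rw [piC_snd_ge m k _ i h, piC_snd_ge m k z i h, actZ_bm,
        if_neg (fun hEq => by have hv := congrArg Fin.val hEq; simp [Fin.val_zero] at hv; omega)]

lemma Ppart_eq_inv {n : ℕ} {a : Fin n → SU2} {b : Fin (n+1) → SU2} (h : NGrel a b) :
    Ppart a b = (b 0)⁻¹ :=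
  eq_inv_of_mul_eq_one_right ((NGrel_iff a b).mp h)

/-- Fibers of `π_C` are contained in orbits. -/
lemma piC_fiber (hk : 1 ≤ k) (z w : Amb m k) (hz : z ∈ Zset m k) (hw : w ∈ Zset m k)
    (hpw : piC m k z = piC m k w) :
    actZ m k ((w.1.1 (Fin.last m))⁻¹ * z.1.1 (Fin.last m)) z = w := by
  obtain ⟨hz1, hz2, hz3⟩ := hz
  obtain ⟨hw1, hw2, hw3⟩ := hw
  have ha := fun i => congrFun (congrArg Prod.fst hpw) i
  have hb := fun i => congrFun (congrArg Prod.snd hpw) i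
  set σ : SU2 := (w.1.1 (Fin.last m))⁻¹ * z.1.1 (Fin.last m) with hσ
  have F1 : ∀ i : Fin (m+1), i.1 < m → z.1.1 i = w.1.1 i := by
    intro i hi
    have h := ha ⟨i.1, by omega⟩
    rw [piC_fst_lt m k z _ hi, piC_fst_lt m k w _ hi] at h
    simpa using h
  have F2 : ∀ j : Fin k, z.1.1 (Fin.last m) * z.2.1 j = w.1.1 (Fin.last m) * w.2.1 j := by
    intro j
    have h := ha ⟨m + j.1, by omega⟩
    rw [piC_fst_ge m k z _ (by show ¬ m + j.1 < m; omega),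
      piC_fst_ge m k w _ (by show ¬ m + j.1 < m; omega)] at h
    simpa using h
  have F3 : ∀ i : Fin (m+2), i.1 < m + 1 → z.1.2 i = w.1.2 i := by
    intro i hi
    have h := hb ⟨i.1, by omega⟩
    rw [piC_snd_lt m k z _ hi, piC_snd_lt m k w _ hi] at h
    simpa using h
  have F4 : ∀ j : Fin (k+1), j.1 ≠ 0 → z.2.2 j = w.2.2 j := by
    intro j hj
    have h := hb ⟨m + j.1, by omega⟩
    rw [piC_snd_ge m k z _ (by show ¬ m + j.1 < m + 1; omega),
      piC_snd_ge m k w _ (by show ¬ m + j.1 < m + 1; omega)] at h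
    simpa using h
  have Fw : w.2.1 = fun j => σ * z.2.1 j := by
    funext j
    have h2 := F2 j
    calc w.2.1 j = (w.1.1 (Fin.last m))⁻¹ * (w.1.1 (Fin.last m) * w.2.1 j) := by group
      _ = (w.1.1 (Fin.last m))⁻¹ * (z.1.1 (Fin.last m) * z.2.1 j) := by rw [h2]
      _ = σ * z.2.1 j := by rw [hσ]; group
  have hQ : Ppart w.2.1 w.2.2 = σ * Ppart z.2.1 z.2.2 * σ⁻¹ := by
    rw [Fw, Ppart_conj]
    rw [Ppart_congr z.2.1 w.2.2 z.2.2 (fun j => (F4 j.succ (by simp)).symm)]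
  refine Prod.ext (Prod.ext ?_ ?_) (Prod.ext ?_ ?_)
  · funext i
    rw [actZ_ap]
    by_cases hi : i = Fin.last m
    · rw [if_pos hi, hi, hσ]
      group
    · rw [if_neg hi]
      refine F1 i ?_
      have : i.1 ≠ m := fun hv => hi (Fin.ext (by simp [Fin.last, hv]))
      omega
  · funext i
    rw [actZ_bp]
    by_cases hi : i = Fin.last (m+1)
    · rw [if_pos hi, hi]
      have hzB : z.1.2 (Fin.last (m+1)) = Ppart z.2.1 z.2.2 := by
        rw [Ppart_eq_inv hz2]
        exact eq_inv_of_mul_eq_one_right hz3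
      have hwB : w.1.2 (Fin.last (m+1)) = Ppart w.2.1 w.2.2 := by
        rw [Ppart_eq_inv hw2]
        exact eq_inv_of_mul_eq_one_right hw3
      rw [hzB, hwB, hQ]
    · rw [if_neg hi]
      refine F3 i ?_
      have : i.1 ≠ m + 1 := fun hv => hi (Fin.ext (by simp [Fin.last, hv]))
      omega
  · funext j
    rw [actZ_am]
    exact (congrFun Fw j).symm
  · funext j
    rw [actZ_bm]
    by_cases hj : j = 0
    · rw [if_pos hj, hj]
      have hz0 : z.2.2 0 = (Ppart z.2.1 z.2.2)⁻¹ :=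
        eq_inv_of_mul_eq_one_left ((NGrel_iff _ _).mp hz2)
      have hw0 : w.2.2 0 = (Ppart w.2.1 w.2.2)⁻¹ :=
        eq_inv_of_mul_eq_one_left ((NGrel_iff _ _).mp hw2)
      rw [hz0, hw0, hQ]
      group
    · rw [if_neg hj]
      refine F4 j (fun hv => hj (Fin.ext (by simp [hv])))
end Orbits

section Topology

lemma continuous_piC (m k : ℕ) : Continuous (piC m k) := by
  refine Continuous.prodMk (continuous_pi fun i => ?_) (continuous_pi fun i => ?_)
  · by_cases h : (i : ℕ) < m
    · simp only [piC, dif_pos h]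
      exact (continuous_apply _).comp (continuous_fst.comp continuous_fst)
    · simp only [piC, dif_neg h]
      exact ((continuous_apply _).comp (continuous_fst.comp continuous_fst)).mul
        ((continuous_apply _).comp (continuous_fst.comp continuous_snd))
  · by_cases h : (i : ℕ) < m + 1
    · simp only [piC, dif_pos h]
      exact (continuous_apply _).comp (continuous_snd.comp continuous_fst)
    · simp only [piC, dif_neg h]
      exact (continuous_apply _).comp (continuous_snd.comp continuous_snd)

lemma isClosed_Zset (m k : ℕ) : IsClosed (Zset m k) := by
  have c11 : Continuous fun z : Amb m k => z.1.1 := continuous_fst.comp continuous_fst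
  have c12 : Continuous fun z : Amb m k => z.1.2 := continuous_snd.comp continuous_fst
  have c21 : Continuous fun z : Amb m k => z.2.1 := continuous_fst.comp continuous_snd
  have c22 : Continuous fun z : Amb m k => z.2.2 := continuous_snd.comp continuous_snd
  have h1 : IsClosed {z : Amb m k | NGrel z.1.1 z.1.2} := by
    refine isClosed_eq (Continuous.mul ((continuous_apply 0).comp c12) ?_) continuous_const
    exact continuous_ofFn_prod _ fun i =>
      (((continuous_apply i).comp c11).mul ((continuous_apply i.succ).comp c12)).mul
        ((continuous_apply i).comp c11).inv
  have h2 : IsClosed {z : Amb m k | NGrel z.2.1 z.2.2} := by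
    refine isClosed_eq (Continuous.mul ((continuous_apply 0).comp c22) ?_) continuous_const
    exact continuous_ofFn_prod _ fun i =>
      (((continuous_apply i).comp c21).mul ((continuous_apply i.succ).comp c22)).mul
        ((continuous_apply i).comp c21).inv
  have h3 : IsClosed {z : Amb m k | z.2.2 0 * z.1.2 (Fin.last (m+1)) = 1} :=
    isClosed_eq (((continuous_apply 0).comp c22).mul ((continuous_apply _).comp c12))
      continuous_const
  exact (h1.inter (h2.inter h3) : _)

end Topology

/-- the gluing map `π_C` is a surjection of `Z` onto `N^G(Σ)` whose fibers
are the `SU(2)`-orbits, and it induces a homeomorphism `Z/SU(2) ≅ N^G(Σ)`.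
Here the glued surface has `n = m+k+1` boundary circles. -/
theorem stmt_3 (m k : ℕ) (hm : 1 ≤ m) (hk : 1 ≤ k) :
    (∀ z ∈ Zset m k, piC m k z ∈ NGset (m+k)) ∧
    (∀ p ∈ NGset (m+k), ∃ z ∈ Zset m k, piC m k z = p) ∧
    (∀ z w : Zset m k, piC m k z.1 = piC m k w.1 ↔ ∃ σ : SU2, actZ m k σ z.1 = w.1) ∧
    (∃ h : Quotient (zSetoid m k) ≃ₜ NGset (m+k),
      ∀ (z : Zset m k) (p : (Fin (m+k) → SU2) × (Fin (m+k+1) → SU2))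
        (hp : p ∈ NGset (m+k)),
        piC m k z.1 = p → h (Quotient.mk (zSetoid m k) z) = ⟨p, hp⟩) := by
  have part1 : ∀ z ∈ Zset m k, piC m k z ∈ NGset (m+k) := fun z hz => piC_mem m k hk z hz
  have part2 : ∀ p ∈ NGset (m+k), ∃ z ∈ Zset m k, piC m k z = p :=
    fun p hp => ⟨liftZ m k p, liftZ_mem p hk hp, piC_liftZ p hk⟩
  have part3 : ∀ z w : Zset m k, piC m k z.1 = piC m k w.1 ↔ ∃ σ : SU2, actZ m k σ z.1 = w.1 := by
    intro z w
    constructor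
    · intro h
      exact ⟨_, piC_fiber hk z.1 w.1 z.2 w.2 h⟩
    · rintro ⟨σ, h⟩
      rw [← h, piC_actZ]
  refine ⟨part1, part2, part3, ?_⟩
  haveI : CompactSpace (Zset m k) := isCompact_iff_compactSpace.mp (isClosed_Zset m k).isCompact
  let f : Zset m k → NGset (m+k) := fun z => ⟨piC m k z.1, part1 z.1 z.2⟩
  have hresp : ∀ a b : Zset m k, (zSetoid m k).r a b → f a = f b := by
    rintro a b ⟨σ, h⟩
    exact Subtype.ext (show piC m k a.1 = piC m k b.1 by rw [← h, piC_actZ])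
  let F := Quotient.lift f hresp
  have hFcont : Continuous F :=
    Continuous.quotient_lift
      (Continuous.subtype_mk ((continuous_piC m k).comp continuous_subtype_val) _) hresp
  have hFbij : Function.Bijective F := by
    constructor
    · refine Quotient.ind fun z => Quotient.ind fun w h => ?_
      apply Quotient.sound
      exact (part3 z w).mp (congrArg Subtype.val h)
    · intro q
      obtain ⟨z, hz, hzp⟩ := part2 q.1 q.2
      exact ⟨Quotient.mk _ ⟨z, hz⟩, Subtype.ext hzp⟩
  let e : Quotient (zSetoid m k) ≃ NGset (m+k) := Equiv.ofBijective F hFbij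
  have he : Continuous e := hFcont
  refine ⟨he.homeoOfEquivCompactToT2, ?_⟩
  intro z p hp hzp
  exact Subtype.ext hzp
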